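/- Let d ∈ (−1,1), ω ∈ ℝ, γ > 0 and β ∈ ℂ, and let ϱᵃ_∞ be the 2×2 matrix with entries (ϱᵃ_∞)₁₁ = 1/2 + d(γ² + ω²)/(2(γ² + ω² + 2|β|²)), (ϱᵃ_∞)₁₂ = dβ(γ − iω)/(γ² + ω² + 2|β|²), (ϱᵃ_∞)₂₁ = d·conj(β)(γ + iω)/(γ² + ω² + 2|β|²), (ϱᵃ_∞)₂₂ = 1/2 − d(γ² + ω²)/(2(γ² + ω² + 2|β|²)). Then ϱᵃ_∞ is a density matrix: it is Hermitian, positive semidefinite and has trace 1. -/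

import Mathlib

open Matrix ComplexOrder

lemma psd_fin_two (a e : ℝ) (b : ℂ) (ha : 0 ≤ a) (he : 0 ≤ e)
    (hb : ‖b‖ ^ 2 ≤ a * e) :
    (!![(a : ℂ), b; (starRingEnd ℂ) b, (e : ℂ)]).PosSemidef := by
  rw [Matrix.posSemidef_iff_dotProduct_mulVec]
  constructor
  · ext i j
    fin_cases i <;> fin_cases j <;>
      simp [Matrix.conjTranspose_apply, Complex.ext_iff]
  · intro x
    have key : (star x) ⬝ᵥ (!![(a : ℂ), b; (starRingEnd ℂ) b, (e : ℂ)]).mulVec x =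
        (starRingEnd ℂ) (x 0) * ((a : ℂ) * x 0 + b * x 1) +
        (starRingEnd ℂ) (x 1) * ((starRingEnd ℂ) b * x 0 + (e : ℂ) * x 1) := by
      simp [Matrix.mulVec, dotProduct, Fin.sum_univ_two]
    rw [key, Complex.le_def]
    have habs : b.re ^ 2 + b.im ^ 2 ≤ a * e := by
      have h := Complex.sq_norm b
      rw [Complex.normSq_apply] at h
      nlinarith [hb]
    constructor
    · simp only [Complex.add_re, Complex.mul_re, Complex.mul_im, Complex.add_im,
        Complex.conj_re, Complex.conj_im, Complex.ofReal_re, Complex.ofReal_im,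
        Complex.zero_re]
      set p := (x 0).re; set q := (x 0).im; set r := (x 1).re; set s := (x 1).im
      set u := b.re; set v := b.im
      set T := p * u * r - p * v * s + q * u * s + q * v * r with hTdef
      have hA0 : 0 ≤ a * (p^2+q^2) + e * (r^2+s^2) := by positivity
      have hT : T^2 ≤ a * e * ((p^2+q^2) * (r^2+s^2)) := by
        have c1 : T^2 ≤ (u^2+v^2) * ((p^2+q^2) * (r^2+s^2)) := by
          rw [hTdef]
          nlinarith [sq_nonneg ((u*p + v*q)*s - (q*u - p*v)*r)]
        have c2 : 0 ≤ (p^2+q^2) * (r^2+s^2) := by positivity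
        nlinarith [mul_le_mul_of_nonneg_right habs c2]
      nlinarith [hT, sq_nonneg (a*(p^2+q^2) - e*(r^2+s^2)), hA0]
    · simp only [Complex.add_im, Complex.mul_re, Complex.mul_im, Complex.add_re,
        Complex.conj_re, Complex.conj_im, Complex.ofReal_re, Complex.ofReal_im,
        Complex.zero_im]
      ring

/-- The equilibrium state `ϱᵃ_∞` of the atomic GKSL generator. -/
noncomputable def rhoAInf (d ω γ : ℝ) (β : ℂ) : Matrix (Fin 2) (Fin 2) ℂ :=
  !![((1 / 2 + d * (γ ^ 2 + ω ^ 2) /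
        (2 * (γ ^ 2 + ω ^ 2 + 2 * ‖β‖ ^ 2)) : ℝ) : ℂ),
     (d : ℂ) * β * ((γ : ℂ) - (ω : ℂ) * Complex.I) /
        (((γ ^ 2 + ω ^ 2 + 2 * ‖β‖ ^ 2 : ℝ)) : ℂ);
     (d : ℂ) * (starRingEnd ℂ) β * ((γ : ℂ) + (ω : ℂ) * Complex.I) /
        (((γ ^ 2 + ω ^ 2 + 2 * ‖β‖ ^ 2 : ℝ)) : ℂ),
     ((1 / 2 - d * (γ ^ 2 + ω ^ 2) /
        (2 * (γ ^ 2 + ω ^ 2 + 2 * ‖β‖ ^ 2)) : ℝ) : ℂ)]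

/-- **`ϱᵃ_∞` is a density matrix**: it is Hermitian, positive semidefinite and has
trace `1`. -/
theorem rhoAInf_is_density_matrix
    (d ω γ : ℝ) (β : ℂ) (hd : -1 < d ∧ d < 1) (hγ : 0 < γ) :
    (rhoAInf d ω γ β).IsHermitian ∧ (rhoAInf d ω γ β).PosSemidef ∧
      (rhoAInf d ω γ β).trace = 1 := by
  obtain ⟨hd1, hd2⟩ := hd
  set K : ℝ := γ ^ 2 + ω ^ 2 with hK
  set B : ℝ := ‖β‖ ^ 2 with hB
  have hBnn : 0 ≤ B := by positivity
  have hKpos : 0 < K := by positivity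
  have hD : 0 < K + 2 * B := by positivity
  set D : ℝ := K + 2 * B with hDdef
  have hDne : D ≠ 0 := ne_of_gt hD
  set b : ℂ := (d : ℂ) * β * ((γ : ℂ) - (ω : ℂ) * Complex.I) / ((D : ℝ) : ℂ) with hb
  have heq : rhoAInf d ω γ β =
      !![(((D + d * K) / (2 * D) : ℝ) : ℂ), b;
         (starRingEnd ℂ) b, (((D - d * K) / (2 * D) : ℝ) : ℂ)] := by
    have e00 : (1 / 2 + d * K / (2 * D) : ℝ) = (D + d * K) / (2 * D) := by
      field_simp
    have e11 : (1 / 2 - d * K / (2 * D) : ℝ) = (D - d * K) / (2 * D) := by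
      field_simp
    have e10 : (d : ℂ) * (starRingEnd ℂ) β * ((γ : ℂ) + (ω : ℂ) * Complex.I) /
        ((D : ℝ) : ℂ) = (starRingEnd ℂ) b := by
      rw [hb]
      simp only [map_div₀, _root_.map_mul, map_sub, Complex.conj_ofReal, Complex.conj_I]
      ring
    rw [rhoAInf, ← hK, ← hB, ← hDdef, e00, e11, e10]
  have habs : ‖b‖ ^ 2 = d ^ 2 * B * K / D ^ 2 := by
    rw [← Complex.normSq_eq_norm_sq, hb, map_div₀, _root_.map_mul, _root_.map_mul]
    have h1 : Complex.normSq ((γ : ℂ) - (ω : ℂ) * Complex.I) = K := by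
      simp [Complex.normSq_apply, hK]; ring
    have h2 : Complex.normSq ((d : ℝ) : ℂ) = d ^ 2 := by
      simp [Complex.normSq_apply]; ring
    have h3 : Complex.normSq (((D : ℝ)) : ℂ) = D ^ 2 := by
      simp [Complex.normSq_apply]; ring
    rw [h1, h2, h3, Complex.normSq_eq_norm_sq, ← hB]
  have hd2' : d ^ 2 ≤ 1 := by nlinarith
  have ha : 0 ≤ (D + d * K) / (2 * D) := by
    apply div_nonneg _ (by positivity)
    nlinarith [mul_pos (show (0:ℝ) < 1 + d by linarith) hKpos]
  have he : 0 ≤ (D - d * K) / (2 * D) := by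
    apply div_nonneg _ (by positivity)
    nlinarith [mul_pos (show (0:ℝ) < 1 - d by linarith) hKpos]
  have hble : ‖b‖ ^ 2 ≤ (D + d * K) / (2 * D) * ((D - d * K) / (2 * D)) := by
    rw [habs, div_mul_div_comm, div_le_div_iff₀ (by positivity) (by positivity), hDdef]
    have hpos : 0 ≤ (1 - d ^ 2) * (K ^ 2 + 4 * K * B) + 4 * B ^ 2 := by
      nlinarith [mul_nonneg (sub_nonneg.mpr hd2') (show (0:ℝ) ≤ K ^ 2 + 4 * K * B by positivity), sq_nonneg B]
    nlinarith [mul_nonneg (sq_nonneg (K + 2 * B)) hpos]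
  have hpsd := psd_fin_two _ _ _ ha he hble
  rw [heq]
  refine ⟨hpsd.1, hpsd, ?_⟩
  have hsum : (D + d * K) / (2 * D) + (D - d * K) / (2 * D) = 1 := by
    field_simp
    ring
  rw [Matrix.trace_fin_two]
  simp only [Matrix.cons_val', Matrix.cons_val_zero, Matrix.cons_val_one, Matrix.head_cons,
    Matrix.empty_val', Matrix.cons_val_fin_one, Matrix.head_fin_const, Matrix.of_apply]
  rw [← Complex.ofReal_add, hsum, Complex.ofReal_one]
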